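/- Let K be a field of characteristic different from 2, k ≥ 1, and let A_1, ..., A_k be antisymmetric square matrices over K (A_iᵀ = −A_i) with A_i of size n_i × n_i, and set r_i = rank(A_i) (each r_i is even). Then for every natural number l, there exists an antisymmetric completion of rank l of the block diagonal partial matrix diag(A_1, ..., A_k) if and only if there exists an antisymmetric completion of rank l of the block diagonal partial matrix diag(R^{r_1}_{n_1}, ..., R^{r_k}_{n_k}). -/

import Mathlib

open Matrix

/-- `M` is a completion of the block diagonal partial matrix
`diag (A 0, ..., A (k-1))`: its `(i,i)` diagonal block equals `A i` for every `i`. -/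
def IsCompletion {K : Type*} [Field K] {k : ℕ} {n : Fin k → ℕ}
    (A : ∀ i : Fin k, Matrix (Fin (n i)) (Fin (n i)) K)
    (M : Matrix (Σ i : Fin k, Fin (n i)) (Σ i : Fin k, Fin (n i)) K) : Prop :=
  ∀ (i : Fin k) (x y : Fin (n i)), M ⟨i, x⟩ ⟨i, y⟩ = A i x y

/-- `Rmat K r n` is the `n × n` matrix `R^r_n` (0-indexed): block diagonal with `r/2`
diagonal blocks equal to `[[0,1],[-1,0]]` followed by zeros. -/
def Rmat (K : Type*) [Zero K] [One K] [Neg K] (r n : ℕ) : Matrix (Fin n) (Fin n) K :=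
  Matrix.of fun i j =>
    if (i : ℕ) % 2 = 0 ∧ (j : ℕ) = (i : ℕ) + 1 ∧ (j : ℕ) < r then 1
    else if (j : ℕ) % 2 = 0 ∧ (i : ℕ) = (j : ℕ) + 1 ∧ (i : ℕ) < r then -1
    else 0

section Aux

variable {K : Type*} [Field K]

lemma skew_congr {m : Type*} [Fintype m] {A : Matrix m m K} (hA : Aᵀ = -A)
    (P : Matrix m m K) : (Pᵀ * A * P)ᵀ = -(Pᵀ * A * P) := by
  simp only [transpose_mul, transpose_transpose, hA]
  simp only [Matrix.mul_neg, Matrix.neg_mul, Matrix.mul_assoc]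

lemma congr_comp {m : Type*} [Fintype m] {A B C P Q : Matrix m m K}
    (h1 : Pᵀ * A * P = B) (h2 : Qᵀ * B * Q = C) :
    (P * Q)ᵀ * A * (P * Q) = C := by
  rw [← h2, ← h1]
  simp only [transpose_mul, Matrix.mul_assoc]

lemma rank_congr {m : Type*} [Fintype m] [DecidableEq m] {P : Matrix m m K}
    (hP : IsUnit P) (M : Matrix m m K) : (Pᵀ * M * P).rank = M.rank := by
  have hd : IsUnit P.det := (Matrix.isUnit_iff_isUnit_det P).mp hP
  rw [rank_mul_eq_left_of_isUnit_det P (Pᵀ * M) hd,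
    rank_mul_eq_right_of_isUnit_det Pᵀ M (by rwa [det_transpose])]

lemma skew_diag {m : Type*} (h2 : (2 : K) ≠ 0) {A : Matrix m m K} (hA : Aᵀ = -A) (i : m) :
    A i i = 0 := by
  have := congrFun (congrFun hA i) i
  simp only [transpose_apply, Matrix.neg_apply] at this
  have h : (2 : K) * A i i = 0 := by rw [two_mul]; linear_combination this
  rcases mul_eq_zero.mp h with h | h
  · exact absurd h h2
  · exact h

lemma Rmat_zero (n : ℕ) : Rmat K 0 n = 0 := by
  ext i j
  simp only [Rmat, Matrix.of_apply, Matrix.zero_apply]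
  split_ifs <;> first | rfl | (exfalso; omega)

lemma Rmat_transpose (r n : ℕ) : (Rmat K r n)ᵀ = -(Rmat K r n) := by
  ext i j
  simp only [Rmat, transpose_apply, Matrix.of_apply, Matrix.neg_apply]
  split_ifs <;> first | rfl | (exfalso; omega) | norm_num

lemma Rmat_apply (hr : r % 2 = 0) (i t : Fin n) :
    Rmat K r n i t =
      if (i : ℕ) < r ∧ (t : ℕ) = (if (i : ℕ) % 2 = 0 then (i : ℕ) + 1 else (i : ℕ) - 1)
      then (if (i : ℕ) % 2 = 0 then (1 : K) else -1) else 0 := by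
  simp only [Rmat, Matrix.of_apply]
  split_ifs <;> first | rfl | omega

lemma Rmat_mul_transpose (hr : r % 2 = 0) (hrn : r ≤ n) :
    Rmat K r n * (Rmat K r n)ᵀ =
      diagonal (fun i : Fin n => if (i : ℕ) < r then (1 : K) else 0) := by
  ext i j
  rw [mul_apply]
  simp only [transpose_apply, diagonal_apply, Fin.ext_iff]
  by_cases hi : (i : ℕ) < r
  · have hp : (if (i : ℕ) % 2 = 0 then (i : ℕ) + 1 else (i : ℕ) - 1) < n := by
      split_ifs <;> omega
    rw [Finset.sum_eq_single (⟨_, hp⟩ : Fin n)]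
    · rw [Rmat_apply hr, Rmat_apply hr]
      by_cases hpi : (i : ℕ) % 2 = 0 <;> by_cases hpj : (j : ℕ) % 2 = 0 <;>
        simp only [hpi, hpj, if_true, if_false, eq_self_iff_true, and_true] <;>
        split_ifs <;> first | rfl | (exfalso; omega) | norm_num
    · intro b _ hb
      have hb' : (b : ℕ) ≠ (if (i : ℕ) % 2 = 0 then (i : ℕ) + 1 else (i : ℕ) - 1) :=
        fun h => hb (Fin.ext h)
      rw [Rmat_apply hr, if_neg (by tauto), zero_mul]
    · intro h; exact absurd (Finset.mem_univ _) h
  · have h0 : ∀ b ∈ Finset.univ, Rmat K r n i b * Rmat K r n j b = 0 := by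
      intro b _
      rw [Rmat_apply hr (i := i), if_neg (by tauto), zero_mul]
    rw [Finset.sum_eq_zero h0]
    split_ifs <;> first | rfl | (exfalso; omega)

lemma diag_mul_Rmat (r n : ℕ) :
    diagonal (fun i : Fin n => if (i : ℕ) < r then (1 : K) else 0) * Rmat K r n
      = Rmat K r n := by
  ext i j
  rw [diagonal_mul]
  simp only [Rmat, Matrix.of_apply]
  split_ifs <;> first | rfl | (exfalso; omega) | norm_num

lemma rank_Rmat (hr : r % 2 = 0) (hrn : r ≤ n) : (Rmat K r n).rank = r := by
  classical
  have hDrank : (diagonal (fun i : Fin n => if (i : ℕ) < r then (1 : K) else 0)).rank = r := by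
    rw [Matrix.rank_diagonal]
    have : Fintype.card {i : Fin n // (if (i : ℕ) < r then (1 : K) else 0) ≠ 0}
        = Fintype.card (Fin r) := by
      apply Fintype.card_congr
      refine ⟨fun x => ⟨x.1, ?_⟩, fun j => ⟨⟨j.1, lt_of_lt_of_le j.2 hrn⟩, ?_⟩, ?_, ?_⟩
      · rcases x with ⟨x, hx⟩
        by_contra h
        simp only [not_lt] at h
        exact hx (by rw [if_neg (by omega)])
      · simp only [Fin.is_lt, if_pos]
        exact one_ne_zero
      · intro x; rfl
      · intro x; rfl
    rw [this, Fintype.card_fin]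
  have h1 : (Rmat K r n).rank
      ≤ (diagonal (fun i : Fin n => if (i : ℕ) < r then (1 : K) else 0)).rank := by
    conv_lhs => rw [← diag_mul_Rmat (K := K) r n]
    exact Matrix.rank_mul_le_left _ _
  have h2 : (diagonal (fun i : Fin n => if (i : ℕ) < r then (1 : K) else 0)).rank
      ≤ (Rmat K r n).rank := by
    rw [← Rmat_mul_transpose hr hrn]
    exact Matrix.rank_mul_le_left _ _
  omega

end Aux

section Normal

variable {K : Type*} [Field K]

private lemma submatrix_congr {n : ℕ} (A : Matrix (Fin n) (Fin n) K)
    (σ : Equiv.Perm (Fin n)) :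
    ((1 : Matrix (Fin n) (Fin n) K).submatrix ⇑σ.symm id)ᵀ * A *
      (1 : Matrix (Fin n) (Fin n) K).submatrix ⇑σ.symm id = A.submatrix ⇑σ ⇑σ := by
  rw [transpose_submatrix, transpose_one, one_submatrix_mul id σ.symm A,
    mul_submatrix_one σ.symm id, submatrix_submatrix]
  simp [Function.comp_def]

private lemma perm_isUnit {n : ℕ} (σ : Equiv.Perm (Fin n)) :
    IsUnit ((1 : Matrix (Fin n) (Fin n) K).submatrix ⇑σ.symm id) := by
  have h := submatrix_congr (1 : Matrix (Fin n) (Fin n) K) σ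
  rw [Matrix.mul_one, submatrix_one_equiv] at h
  exact ⟨⟨_, _, mul_eq_one_comm.mp h, h⟩, rfl⟩

private lemma skew_normal_aux (h2 : (2 : K) ≠ 0) :
    ∀ n : ℕ, ∀ A : Matrix (Fin n) (Fin n) K, Aᵀ = -A →
      ∃ (P : Matrix (Fin n) (Fin n) K) (r : ℕ),
        IsUnit P ∧ r % 2 = 0 ∧ r ≤ n ∧ Pᵀ * A * P = Rmat K r n := by
  intro n
  induction n using Nat.strong_induction_on with
  | _ n IH =>
    intro A hA
    by_cases hA0 : A = 0
    · refine ⟨1, 0, isUnit_one, rfl, Nat.zero_le n, ?_⟩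
      rw [hA0, Rmat_zero]
      simp
    obtain ⟨i, j, hij⟩ : ∃ i j, A i j ≠ 0 := by
      by_contra h
      push_neg at h
      exact hA0 (by ext a b; simpa using h a b)
    have hne : i ≠ j := by
      rintro rfl
      exact hij (skew_diag h2 hA i)
    have hvne : (i : ℕ) ≠ (j : ℕ) := fun h => hne (Fin.ext h)
    obtain ⟨m, rfl⟩ : ∃ m, n = 2 + m := ⟨n - 2, by omega⟩
    set z : Fin (2 + m) := ⟨0, by omega⟩ with hz
    set o : Fin (2 + m) := ⟨1, by omega⟩ with ho
    have hzo : z ≠ o := by simp [hz, ho, Fin.ext_iff]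
    set τ : Equiv.Perm (Fin (2 + m)) := Equiv.swap z i with hτ
    have hττ : ∀ x, τ (τ x) = x := fun x => Equiv.swap_apply_self _ _ _
    have hτz : τ z = i := Equiv.swap_apply_left _ _
    have hj' : τ j ≠ z := by
      intro h
      apply hne
      have h3 : j = τ z := by rw [← h, hττ]
      rw [hτz] at h3
      exact h3.symm
    set σ : Equiv.Perm (Fin (2 + m)) := τ * Equiv.swap o (τ j) with hσ
    have hσz : σ z = i := by
      have h1 : Equiv.swap o (τ j) z = z :=
        Equiv.swap_apply_of_ne_of_ne hzo (Ne.symm hj')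
      show τ (Equiv.swap o (τ j) z) = i
      rw [h1, hτz]
    have hσo : σ o = j := by
      show τ (Equiv.swap o (τ j) o) = j
      rw [Equiv.swap_apply_left, hττ]
    set P₁ : Matrix (Fin (2 + m)) (Fin (2 + m)) K :=
      (1 : Matrix (Fin (2 + m)) (Fin (2 + m)) K).submatrix ⇑σ.symm id with hP₁
    have hP₁A : P₁ᵀ * A * P₁ = A.submatrix ⇑σ ⇑σ := submatrix_congr A σ
    have hP₁unit : IsUnit P₁ := perm_isUnit σ
    set B := A.submatrix ⇑σ ⇑σ with hB
    have hBskew : Bᵀ = -B := by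
      rw [hB, transpose_submatrix, hA]
      ext x y
      simp
    have hBzo : B z o = A i j := by
      rw [hB, submatrix_apply, hσz, hσo]
    set d : Fin (2 + m) → K := fun t => if t = o then (A i j)⁻¹ else 1 with hd
    have hdne : ∀ t, d t ≠ 0 := by
      intro t
      rw [hd]
      dsimp only
      split_ifs
      · exact inv_ne_zero hij
      · exact one_ne_zero
    set D := (diagonal d : Matrix (Fin (2 + m)) (Fin (2 + m)) K) with hD
    have hDunit : IsUnit D := by
      refine isUnit_iff_exists.mpr ⟨diagonal fun t => (d t)⁻¹, ?_, ?_⟩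
      · rw [hD, diagonal_mul_diagonal]
        have h3 : (fun t => d t * (d t)⁻¹) = fun _ => (1 : K) :=
          funext fun t => mul_inv_cancel₀ (hdne t)
        rw [h3, diagonal_one]
      · rw [hD, diagonal_mul_diagonal]
        have h3 : (fun t => (d t)⁻¹ * d t) = fun _ => (1 : K) :=
          funext fun t => inv_mul_cancel₀ (hdne t)
        rw [h3, diagonal_one]
    have hDt : Dᵀ = D := diagonal_transpose d
    set C := D * B * D with hC
    have hDC : Dᵀ * B * D = C := by rw [hDt, hC]
    have hCskew : Cᵀ = -C := by
      rw [← hDC]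
      exact skew_congr hBskew D
    have hCapp : ∀ x y, C x y = d x * B x y * d y := by
      intro x y
      rw [hC, mul_diagonal, diagonal_mul]
    have hCzo : C z o = 1 := by
      rw [hCapp, hBzo, hd]
      dsimp only
      rw [if_neg hzo, if_pos rfl]
      field_simp
    have hCoz : C o z = -1 := by
      have h3 := congrFun (congrFun hCskew o) z
      simp only [transpose_apply, Matrix.neg_apply] at h3
      rw [hCzo] at h3
      linear_combination h3
    have hCzz : C z z = 0 := skew_diag h2 hCskew z
    have hCoo : C o o = 0 := skew_diag h2 hCskew o
    set e : Fin 2 ⊕ Fin m ≃ Fin (2 + m) := finSumFinEquiv with he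
    have hel : ∀ a : Fin 2, ((e (Sum.inl a)) : ℕ) = (a : ℕ) := by
      intro a
      rw [he]
      simp
    have her : ∀ b : Fin m, ((e (Sum.inr b)) : ℕ) = 2 + (b : ℕ) := by
      intro b
      rw [he]
      simp
    have hez : e (Sum.inl 0) = z := Fin.ext (by rw [hel]; simp [hz])
    have heo : e (Sum.inl 1) = o := Fin.ext (by rw [hel]; simp [ho])
    set C' := C.submatrix ⇑e ⇑e with hC'
    have hC'skew : C'ᵀ = -C' := by
      rw [hC', transpose_submatrix, hCskew]
      ext x y
      simp
    set J : Matrix (Fin 2) (Fin 2) K := !![0, 1; -1, 0] with hJ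
    have hJJ : J * J = -1 := by
      rw [hJ]
      ext a b
      fin_cases a <;> fin_cases b <;>
        simp [Matrix.mul_apply, Fin.sum_univ_two]
    have hJt : Jᵀ = -J := by
      rw [hJ]
      ext a b
      fin_cases a <;> fin_cases b <;> simp
    set C12 := C'.toBlocks₁₂ with hC12
    set C22 := C'.toBlocks₂₂ with hC22
    have hC'anti : ∀ p q, C' q p = -C' p q := by
      intro p q
      have h3 := congrFun (congrFun hC'skew p) q
      simpa using h3
    have hblocks : C' = fromBlocks J C12 (-C12ᵀ) C22 := by
      ext p q
      rcases p with a | a <;> rcases q with b | b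
      · rw [fromBlocks_apply₁₁]
        fin_cases a <;> fin_cases b <;>
          simp [hC', hez, heo, hCzz, hCzo, hCoz, hCoo, hJ]
      · rfl
      · rw [fromBlocks_apply₂₁, Matrix.neg_apply, transpose_apply]
        rw [hC12]
        exact hC'anti (Sum.inl b) (Sum.inr a)
      · rfl
    set N := J * C12 with hN
    set X₁ : Matrix (Fin 2 ⊕ Fin m) (Fin 2 ⊕ Fin m) K := fromBlocks 1 N 0 1 with hX₁
    have hX₁unit : IsUnit X₁ := by
      rw [hX₁]
      exact Matrix.isUnit_fromBlocks_zero₂₁.mpr ⟨isUnit_one, isUnit_one⟩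
    set D₂ := Nᵀ * C12 + C22 with hD₂def
    have hNt : Nᵀ * J = C12ᵀ := by
      rw [hN, transpose_mul, hJt, Matrix.mul_assoc]
      have h3 : (-J) * J = 1 := by
        rw [Matrix.neg_mul, hJJ, neg_neg]
      rw [h3, Matrix.mul_one]
    have hJN : J * N + C12 = 0 := by
      rw [hN, ← Matrix.mul_assoc, hJJ, Matrix.neg_mul, Matrix.one_mul, neg_add_cancel]
    have h21 : Nᵀ * J + -C12ᵀ = 0 := by
      rw [hNt, add_neg_cancel]
    have hG : X₁ᵀ * C' * X₁ = fromBlocks J 0 0 D₂ := by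
      rw [hX₁, hblocks, fromBlocks_transpose]
      simp only [transpose_one, transpose_zero]
      rw [fromBlocks_multiply, fromBlocks_multiply]
      simp only [Matrix.one_mul, Matrix.mul_one, Matrix.zero_mul, Matrix.mul_zero,
        add_zero, zero_add]
      rw [fromBlocks_inj]
      refine ⟨rfl, hJN, h21, ?_⟩
      rw [h21, Matrix.zero_mul, zero_add, hD₂def]
    have hGskew : (fromBlocks J 0 0 D₂)ᵀ = -(fromBlocks J 0 0 D₂) := by
      rw [← hG]
      exact skew_congr hC'skew X₁
    have hD₂skew : D₂ᵀ = -D₂ := by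
      ext a b
      have h3 := congrFun (congrFun hGskew (Sum.inr a)) (Sum.inr b)
      simpa using h3
    obtain ⟨Q, r, hQunit, hr2, hrm, hQ⟩ := IH m (by omega) D₂ hD₂skew
    set X₂ : Matrix (Fin 2 ⊕ Fin m) (Fin 2 ⊕ Fin m) K := fromBlocks 1 0 0 Q with hX₂
    have hX₂unit : IsUnit X₂ := by
      rw [hX₂]
      exact Matrix.isUnit_fromBlocks_zero₂₁.mpr ⟨isUnit_one, hQunit⟩
    have hF : X₂ᵀ * (fromBlocks J 0 0 D₂) * X₂ = fromBlocks J 0 0 (Rmat K r m) := by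
      rw [hX₂, fromBlocks_transpose]
      simp only [transpose_one, transpose_zero]
      rw [fromBlocks_multiply, fromBlocks_multiply]
      simp only [Matrix.one_mul, Matrix.mul_one, Matrix.zero_mul, Matrix.mul_zero,
        add_zero, zero_add]
      rw [fromBlocks_inj]
      exact ⟨rfl, rfl, rfl, hQ⟩
    have hRsub : fromBlocks J 0 0 (Rmat K r m) = (Rmat K (r + 2) (2 + m)).submatrix ⇑e ⇑e := by
      ext p q
      rcases p with a | a <;> rcases q with b | b
      · rw [fromBlocks_apply₁₁, submatrix_apply]
        fin_cases a <;> fin_cases b <;>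
          · simp only [Rmat, Matrix.of_apply, hel, hJ]
            norm_num
            try omega
      · rw [fromBlocks_apply₁₂, submatrix_apply]
        have ha := a.isLt
        simp only [Rmat, Matrix.of_apply, hel, her, Matrix.zero_apply]
        split_ifs <;> first | rfl | (exfalso; omega)
      · rw [fromBlocks_apply₂₁, submatrix_apply]
        have ha := a.isLt
        simp only [Rmat, Matrix.of_apply, hel, her, Matrix.zero_apply]
        split_ifs <;> first | rfl | (exfalso; omega)
      · rw [fromBlocks_apply₂₂, submatrix_apply]
        simp only [Rmat, Matrix.of_apply, her]
        split_ifs <;> first | rfl | (exfalso; omega)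
    have hCsub : C'.submatrix ⇑e.symm ⇑e.symm = C := by
      rw [hC', submatrix_submatrix, Equiv.self_comp_symm, submatrix_id_id]
    set Y := X₁ * X₂ with hY
    have hYunit : IsUnit Y := hX₁unit.mul hX₂unit
    have hYC : Yᵀ * C' * Y = fromBlocks J 0 0 (Rmat K r m) := congr_comp hG hF
    set X := Y.submatrix ⇑e.symm ⇑e.symm with hX
    have hXunit : IsUnit X := by
      obtain ⟨u, hu⟩ := hYunit
      refine isUnit_iff_exists.mpr
        ⟨(↑u⁻¹ : Matrix (Fin 2 ⊕ Fin m) (Fin 2 ⊕ Fin m) K).submatrix ⇑e.symm ⇑e.symm, ?_, ?_⟩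
      · rw [hX, submatrix_mul_equiv, ← hu, u.mul_inv, submatrix_one_equiv]
      · rw [hX, submatrix_mul_equiv, ← hu, u.inv_mul, submatrix_one_equiv]
    have hXC : Xᵀ * C * X = Rmat K (r + 2) (2 + m) := by
      rw [hX, ← hCsub, transpose_submatrix, submatrix_mul_equiv, submatrix_mul_equiv,
        hYC, hRsub, submatrix_submatrix, Equiv.self_comp_symm, submatrix_id_id]
    refine ⟨P₁ * D * X, r + 2, (hP₁unit.mul hDunit).mul hXunit, by omega, by omega, ?_⟩
    exact congr_comp (congr_comp hP₁A hDC) hXC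

lemma skew_normal (h2 : (2 : K) ≠ 0) {n : ℕ} (A : Matrix (Fin n) (Fin n) K)
    (hA : Aᵀ = -A) :
    ∃ P : Matrix (Fin n) (Fin n) K, IsUnit P ∧ Pᵀ * A * P = Rmat K A.rank n := by
  obtain ⟨P, r, hPu, hr2, hrn, hP⟩ := skew_normal_aux h2 n A hA
  have hr : A.rank = r := by
    rw [← rank_congr hPu A, hP, rank_Rmat hr2 hrn]
  rw [hr]
  exact ⟨P, hPu, hP⟩

end Normal

section Block

variable {K : Type*} [Field K]

private lemma blockDiagonal'_mul_apply {k : ℕ} {n : Fin k → ℕ}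
    (B : ∀ i : Fin k, Matrix (Fin (n i)) (Fin (n i)) K)
    (M : Matrix (Σ i : Fin k, Fin (n i)) (Σ i : Fin k, Fin (n i)) K)
    (i : Fin k) (x : Fin (n i)) (q : Σ i : Fin k, Fin (n i)) :
    (blockDiagonal' B * M) ⟨i, x⟩ q = ∑ u, B i x u * M ⟨i, u⟩ q := by
  rw [mul_apply, ← Finset.univ_sigma_univ, Finset.sum_sigma]
  rw [Finset.sum_eq_single i]
  · exact Finset.sum_congr rfl fun u _ => by rw [blockDiagonal'_apply_eq]
  · intro s _ hs
    apply Finset.sum_eq_zero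
    intro u _
    rw [blockDiagonal'_apply_ne _ _ _ (Ne.symm hs), zero_mul]
  · intro h
    exact absurd (Finset.mem_univ _) h

private lemma mul_blockDiagonal'_apply {k : ℕ} {n : Fin k → ℕ}
    (M : Matrix (Σ i : Fin k, Fin (n i)) (Σ i : Fin k, Fin (n i)) K)
    (B : ∀ i : Fin k, Matrix (Fin (n i)) (Fin (n i)) K)
    (p : Σ i : Fin k, Fin (n i)) (i : Fin k) (y : Fin (n i)) :
    (M * blockDiagonal' B) p ⟨i, y⟩ = ∑ u, M p ⟨i, u⟩ * B i u y := by
  rw [mul_apply, ← Finset.univ_sigma_univ, Finset.sum_sigma]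
  rw [Finset.sum_eq_single i]
  · exact Finset.sum_congr rfl fun u _ => by rw [blockDiagonal'_apply_eq]
  · intro s _ hs
    apply Finset.sum_eq_zero
    intro u _
    rw [blockDiagonal'_apply_ne _ _ _ hs, mul_zero]
  · intro h
    exact absurd (Finset.mem_univ _) h

private lemma isUnit_blockDiagonal' {k : ℕ} {n : Fin k → ℕ}
    {Q : ∀ i : Fin k, Matrix (Fin (n i)) (Fin (n i)) K}
    (hQ : ∀ i, IsUnit (Q i)) : IsUnit (blockDiagonal' Q) := by
  refine isUnit_iff_exists.mpr
    ⟨blockDiagonal' fun i => (↑(hQ i).unit⁻¹ : Matrix (Fin (n i)) (Fin (n i)) K), ?_, ?_⟩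
  · rw [← blockDiagonal'_mul]
    have h1 : (fun i => Q i * (↑(hQ i).unit⁻¹ : Matrix (Fin (n i)) (Fin (n i)) K))
        = (1 : ∀ i : Fin k, Matrix (Fin (n i)) (Fin (n i)) K) :=
      funext fun i => (hQ i).mul_val_inv
    rw [h1, blockDiagonal'_one]
  · rw [← blockDiagonal'_mul]
    have h1 : (fun i => (↑(hQ i).unit⁻¹ : Matrix (Fin (n i)) (Fin (n i)) K) * Q i)
        = (1 : ∀ i : Fin k, Matrix (Fin (n i)) (Fin (n i)) K) :=
      funext fun i => (hQ i).val_inv_mul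
    rw [h1, blockDiagonal'_one]

private lemma completion_transfer {k : ℕ} {n : Fin k → ℕ}
    (A B : ∀ i : Fin k, Matrix (Fin (n i)) (Fin (n i)) K)
    (Q : ∀ i : Fin k, Matrix (Fin (n i)) (Fin (n i)) K)
    (hQ : ∀ i, IsUnit (Q i)) (hAB : ∀ i, (Q i)ᵀ * A i * Q i = B i) (l : ℕ) :
    (∃ M, IsCompletion A M ∧ Mᵀ = -M ∧ M.rank = l) →
    (∃ M, IsCompletion B M ∧ Mᵀ = -M ∧ M.rank = l) := by
  rintro ⟨M, hM, hMs, hMr⟩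
  refine ⟨(blockDiagonal' Q)ᵀ * M * blockDiagonal' Q, ?_, skew_congr hMs _, ?_⟩
  · intro i x y
    rw [blockDiagonal'_transpose, Matrix.mul_assoc, blockDiagonal'_mul_apply]
    have h1 : ∀ u, (M * blockDiagonal' Q) ⟨i, u⟩ ⟨i, y⟩ = ∑ v, A i u v * Q i v y := by
      intro u
      rw [mul_blockDiagonal'_apply]
      exact Finset.sum_congr rfl fun v _ => by rw [hM i u v]
    rw [← hAB i, Matrix.mul_assoc, mul_apply]
    refine Finset.sum_congr rfl fun u _ => ?_
    rw [h1 u, mul_apply]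
  · rw [rank_congr (isUnit_blockDiagonal' hQ), hMr]

end Block

/-- `diag (A 0, ..., A (k-1))` has an antisymmetric completion of rank `l` iff
`diag (R^{r 0}_{n 0}, ..., R^{r (k-1)}_{n (k-1)})` does, where `r i = rank (A i)`. -/
theorem stmt_10 {K : Type*} [Field K] (hchar : ringChar K ≠ 2)
    {k : ℕ} (hk : 0 < k) {n : Fin k → ℕ}
    (A : ∀ i : Fin k, Matrix (Fin (n i)) (Fin (n i)) K)
    (hanti : ∀ i, (A i)ᵀ = -(A i))
    (l : ℕ) :
    (∃ M, IsCompletion A M ∧ Mᵀ = -M ∧ M.rank = l) ↔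
      (∃ M, IsCompletion (fun i => Rmat K ((A i).rank) (n i)) M ∧ Mᵀ = -M ∧
        M.rank = l) := by
  have h2 : (2 : K) ≠ 0 := Ring.two_ne_zero hchar
  have hP : ∀ i, ∃ P, IsUnit P ∧ Pᵀ * A i * P = Rmat K ((A i).rank) (n i) :=
    fun i => skew_normal h2 (A i) (hanti i)
  choose P hPu hPc using hP
  constructor
  · exact completion_transfer A _ P hPu hPc l
  · refine completion_transfer (fun i => Rmat K ((A i).rank) (n i)) A
      (fun i => (↑(hPu i).unit⁻¹ : Matrix (Fin (n i)) (Fin (n i)) K))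
      (fun i => ((hPu i).unit⁻¹).isUnit) (fun i => ?_) l
    have hu : ((hPu i).unit : Matrix (Fin (n i)) (Fin (n i)) K) = P i := (hPu i).unit_spec
    calc (↑(hPu i).unit⁻¹ : Matrix (Fin (n i)) (Fin (n i)) K)ᵀ *
          Rmat K ((A i).rank) (n i) * ↑(hPu i).unit⁻¹
        = (P i * ↑(hPu i).unit⁻¹)ᵀ * A i * (P i * ↑(hPu i).unit⁻¹) := by
          rw [← hPc i, transpose_mul]
          simp only [Matrix.mul_assoc]
      _ = A i := by
          rw [(hPu i).mul_val_inv]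
          simp
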